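/- With P_1 = {x ∈ S : x1+2x2+x3+2x5 ≥ 1, 2x1+x2+2x3+x5 ≥ 1} (a wins under antiplurality) and P_C = {x ∈ S : 2(x1+x2+x5) ≥ 1, 2(x1+x2+x3) ≥ 1} (a is the Condorcet winner), the ratio vol(P_1 ∩ P_C)/vol(P_C) equals 17/27; that is, the limiting Condorcet efficiency of the antiplurality rule under IAC for 3 candidates is 17/27. -/

import Mathlib

open MeasureTheory intervalIntegral
open scoped ENNReal


lemma peel {n : ℕ} (S : Set (Fin (n+1) → ℝ)) (hS : MeasurableSet S) :
    volume S = ∫⁻ t : ℝ, volume {z : Fin n → ℝ | Fin.cons t z ∈ S} := by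
  set e := MeasurableEquiv.piFinSuccAbove (fun _ : Fin (n+1) => ℝ) 0 with he
  have h := (volume_preserving_piFinSuccAbove (fun _ : Fin (n+1) => ℝ) 0).symm
  have hm : MeasurableSet (e.symm ⁻¹' S) := e.symm.measurable hS
  rw [← h.measure_preimage hS.nullMeasurableSet]
  rw [Measure.volume_eq_prod, Measure.prod_apply hm]
  refine lintegral_congr fun t => ?_
  congr 1
  ext z
  simp only [Set.mem_preimage, Set.mem_setOf_eq]
  constructor <;> intro hx <;> [skip; skip] <;>
    · convert hx using 2
      simp [e, MeasurableEquiv.piFinSuccAbove_symm_apply, Fin.insertNth_zero, Fin.consEquiv]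
lemma funeq (x : Fin 1 → ℝ) : (fun _ : Fin 1 => x 0) = x :=
  funext fun i => congrArg x (Subsingleton.elim _ _)

lemma base (S : Set (Fin 1 → ℝ)) (hS : MeasurableSet S) :
    volume S = volume {d : ℝ | (fun _ => d) ∈ S} := by
  have h := volume_preserving_funUnique (Fin 1) ℝ
  have hm : MeasurableSet {d : ℝ | (fun _ => d) ∈ S} :=
    (MeasurableEquiv.funUnique (Fin 1) ℝ).symm.measurable hS
  have hkey : S = (MeasurableEquiv.funUnique (Fin 1) ℝ) ⁻¹' {d : ℝ | (fun _ => d) ∈ S} := by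
    ext x
    simp only [Set.mem_preimage, Set.mem_setOf_eq, MeasurableEquiv.funUnique_apply]
    have : x default = x 0 := congrArg x (Subsingleton.elim _ _)
    rw [this, funeq x]
  conv_lhs => rw [hkey]
  exact h.measure_preimage hm.nullMeasurableSet

lemma measurable_cons {n : ℕ} (t : ℝ) :
    Measurable (fun z : Fin n → ℝ => (Fin.cons t z : Fin (n+1) → ℝ)) := by
  refine measurable_pi_iff.2 fun i => ?_
  refine Fin.cases ?_ ?_ i
  · simp only [Fin.cons_zero]; exact measurable_const
  · intro j; simp only [Fin.cons_succ]; exact measurable_pi_apply j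

lemma vol5 (S : Set (Fin 5 → ℝ)) (hS : MeasurableSet S) :
    volume S = ∫⁻ p, ∫⁻ q, ∫⁻ a, ∫⁻ b, volume {d : ℝ | ![p, q, a, b, d] ∈ S} := by
  rw [peel S hS]
  refine lintegral_congr fun p => ?_
  have h1 : MeasurableSet {z : Fin 4 → ℝ | Fin.cons p z ∈ S} := measurable_cons p hS
  rw [peel _ h1]
  refine lintegral_congr fun q => ?_
  have h2 : MeasurableSet {z : Fin 3 → ℝ | Fin.cons q z ∈ {z | Fin.cons p z ∈ S}} :=
    measurable_cons q h1
  rw [peel _ h2]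
  refine lintegral_congr fun a => ?_
  have h3 : MeasurableSet {z : Fin 2 → ℝ | Fin.cons a z ∈ {z : Fin 3 → ℝ | Fin.cons q z ∈ {z | Fin.cons p z ∈ S}}} :=
    measurable_cons a h2
  rw [peel _ h3]
  refine lintegral_congr fun b => ?_
  have h4 : MeasurableSet {z : Fin 1 → ℝ | Fin.cons b z ∈ {z : Fin 2 → ℝ | Fin.cons a z ∈ {z : Fin 3 → ℝ | Fin.cons q z ∈ {z | Fin.cons p z ∈ S}}}} :=
    measurable_cons b h3
  rw [base _ h4]
  congr 1
  ext d
  simp only [Set.mem_setOf_eq]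
  constructor <;> intro hx <;> [skip; skip] <;>
    · convert hx using 2
      funext i
      fin_cases i <;> rfl

noncomputable def Mt : Matrix (Fin 5) (Fin 5) ℝ :=
  !![0,0,1,0,0; 0,0,0,1,0; 1,0,-1,0,0; 0,0,0,0,1; 0,1,0,-1,0]

noncomputable def Tl : (Fin 5 → ℝ) →ₗ[ℝ] (Fin 5 → ℝ) := Matrix.toLin' Mt

lemma Tl_apply (y : Fin 5 → ℝ) :
    Tl y = ![y 2, y 3, y 0 - y 2, y 4, y 1 - y 3] := by
  funext i
  fin_cases i <;>
    simp [Tl, Mt, Matrix.toLin'_apply, Matrix.mulVec, dotProduct,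
      Fin.sum_univ_five] <;> ring

lemma Tl_det : LinearMap.det Tl = -1 := by
  rw [Tl, LinearMap.det_toLin']
  simp [Mt, Matrix.det_succ_row_zero, Fin.sum_univ_succ]
  simp [Fin.succAbove, Fin.lt_def]

def BPC : Set (Fin 5 → ℝ) :=
  {y | 0 ≤ y 2 ∧ y 2 ≤ y 0 ∧ 0 ≤ y 3 ∧ y 3 ≤ y 1 ∧ 0 ≤ y 4 ∧
    y 0 + y 1 + y 4 ≤ 1 ∧ 1 ≤ 2*(y 2 + y 1) ∧ 1 ≤ 2*(y 0 + y 3)}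

lemma APC_eq : {x : Fin 5 → ℝ |
        (∀ i, 0 ≤ x i) ∧ x 0 + x 1 + x 2 + x 3 + x 4 ≤ 1 ∧
        1 ≤ 2 * (x 0 + x 1 + x 4) ∧ 1 ≤ 2 * (x 0 + x 1 + x 2)} = Tl '' BPC := by
  ext x
  simp only [Set.mem_setOf_eq, Set.mem_image]
  constructor
  · rintro ⟨hpos, hsum, h1, h2⟩
    refine ⟨![x 0 + x 2, x 1 + x 4, x 0, x 1, x 3], ?_, ?_⟩
    · refine ⟨?_, ?_, ?_, ?_, ?_, ?_, ?_, ?_⟩ <;>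
        simp only [BPC, Set.mem_setOf_eq, Matrix.cons_val_zero, Matrix.cons_val_one,
          Matrix.head_cons, Matrix.cons_val_two, Matrix.tail_cons, Matrix.cons_val_three,
          Matrix.cons_val_four] <;>
        [exact hpos 0; linarith [hpos 2]; exact hpos 1; linarith [hpos 4];
         exact hpos 3; linarith; linarith; linarith]
    · rw [Tl_apply]
      funext i
      fin_cases i <;> simp <;> ring
  · rintro ⟨y, hy, rfl⟩
    obtain ⟨h1, h2, h3, h4, h5, h6, h7, h8⟩ := hy
    rw [Tl_apply]
    refine ⟨fun i => ?_, ?_, ?_, ?_⟩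
    · fin_cases i <;> simp <;> linarith
    · simp <;> linarith
    · simp <;> linarith
    · simp <;> linarith

lemma BPC_meas : MeasurableSet BPC := by
  unfold BPC
  simp only [Set.setOf_and]
  refine MeasurableSet.inter ?_ (MeasurableSet.inter ?_ (MeasurableSet.inter ?_
    (MeasurableSet.inter ?_ (MeasurableSet.inter ?_ (MeasurableSet.inter ?_
    (MeasurableSet.inter ?_ ?_)))))) <;>
  · apply measurableSet_le <;> fun_prop

lemma dIcc (p q : ℝ) : {d : ℝ | 0 ≤ d ∧ p + q + d ≤ 1} = Set.Icc 0 (1-p-q) := by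
  ext d; simp only [Set.mem_setOf_eq, Set.mem_Icc]
  constructor <;> rintro ⟨h1, h2⟩ <;> exact ⟨h1, by linarith⟩

lemma bIcc (p q : ℝ) : {b : ℝ | 0 ≤ b ∧ b ≤ q ∧ 1 ≤ 2*(p + b)} = Set.Icc (max 0 (1/2 - p)) q := by
  ext b; simp only [Set.mem_setOf_eq, Set.mem_Icc, max_le_iff]
  constructor <;> rintro ⟨h1, h2⟩
  · exact ⟨⟨h1, by linarith⟩, h2.1⟩
  · exact ⟨h1.1, h2, by linarith [h1.2]⟩

lemma aIcc (p q : ℝ) : {a : ℝ | 0 ≤ a ∧ a ≤ p ∧ 1 ≤ 2*(a + q)} = Set.Icc (max 0 (1/2 - q)) p := by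
  ext a; simp only [Set.mem_setOf_eq, Set.mem_Icc, max_le_iff]
  constructor <;> rintro ⟨h1, h2⟩
  · exact ⟨⟨h1, by linarith⟩, h2.1⟩
  · exact ⟨h1.1, h2, by linarith [h1.2]⟩

open Classical in
lemma innerPC (p q : ℝ) :
    (∫⁻ a : ℝ, ∫⁻ b : ℝ, volume {d : ℝ | ![p, q, a, b, d] ∈ BPC}) =
      ENNReal.ofReal (1 - p - q) * ENNReal.ofReal (q - max 0 (1/2 - p)) *
        ENNReal.ofReal (p - max 0 (1/2 - q)) := by
  have hd : ∀ a b : ℝ, volume {d : ℝ | ![p, q, a, b, d] ∈ BPC} =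
      if (0 ≤ a ∧ a ≤ p ∧ 1 ≤ 2*(a + q)) ∧ (0 ≤ b ∧ b ≤ q ∧ 1 ≤ 2*(p + b)) then
        ENNReal.ofReal (1 - p - q) else 0 := by
    intro a b
    have hset : {d : ℝ | ![p, q, a, b, d] ∈ BPC} =
        if (0 ≤ a ∧ a ≤ p ∧ 1 ≤ 2*(a + q)) ∧ (0 ≤ b ∧ b ≤ q ∧ 1 ≤ 2*(p + b)) then
          Set.Icc 0 (1-p-q) else ∅ := by
      split_ifs with h
      · rw [← dIcc p q]
        ext d
        simp only [BPC, Set.mem_setOf_eq, Matrix.cons_val_zero, Matrix.cons_val_one,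
          Matrix.head_cons, Matrix.cons_val_two, Matrix.tail_cons, Matrix.cons_val_three,
          Matrix.cons_val_four]
        constructor
        · rintro ⟨_, _, _, _, h5, h6, _, _⟩; exact ⟨h5, h6⟩
        · rintro ⟨h5, h6⟩
          exact ⟨h.1.1, h.1.2.1, h.2.1, h.2.2.1, h5, h6, h.1.2.2, h.2.2.2⟩
      · ext d
        simp only [BPC, Set.mem_setOf_eq, Matrix.cons_val_zero, Matrix.cons_val_one,
          Matrix.head_cons, Matrix.cons_val_two, Matrix.tail_cons, Matrix.cons_val_three,
          Matrix.cons_val_four, Set.mem_empty_iff_false, iff_false]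
        rintro ⟨h1, h2, h3, h4, _, _, h7, h8⟩
        exact h ⟨⟨h1, h2, h7⟩, ⟨h3, h4, h8⟩⟩
    rw [hset]
    split_ifs
    · rw [Real.volume_Icc]; norm_num
    · exact measure_empty
  have hb : ∀ a : ℝ, (∫⁻ b : ℝ, volume {d : ℝ | ![p, q, a, b, d] ∈ BPC}) =
      if 0 ≤ a ∧ a ≤ p ∧ 1 ≤ 2*(a + q) then
        ENNReal.ofReal (1 - p - q) * ENNReal.ofReal (q - max 0 (1/2 - p)) else 0 := by
    intro a
    simp_rw [hd a]
    by_cases hCa : 0 ≤ a ∧ a ≤ p ∧ 1 ≤ 2*(a + q)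
    · simp only [hCa, true_and, if_true]
      calc (∫⁻ b : ℝ, if 0 ≤ b ∧ b ≤ q ∧ 1 ≤ 2*(p + b) then ENNReal.ofReal (1 - p - q) else 0)
          = ∫⁻ b : ℝ, Set.indicator {b' : ℝ | 0 ≤ b' ∧ b' ≤ q ∧ 1 ≤ 2*(p + b')}
              (fun _ => ENNReal.ofReal (1 - p - q)) b :=
            lintegral_congr fun b => by simp [Set.indicator_apply, Set.mem_setOf_eq]
        _ = ENNReal.ofReal (1 - p - q) * volume {b' : ℝ | 0 ≤ b' ∧ b' ≤ q ∧ 1 ≤ 2*(p + b')} :=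
            lintegral_indicator_const (by rw [bIcc]; exact measurableSet_Icc) _
        _ = ENNReal.ofReal (1 - p - q) * ENNReal.ofReal (q - max 0 (1/2 - p)) := by
            rw [bIcc, Real.volume_Icc]
    · simp only [hCa, false_and, if_false, lintegral_zero]
  simp_rw [hb]
  calc (∫⁻ a : ℝ, if 0 ≤ a ∧ a ≤ p ∧ 1 ≤ 2*(a + q) then
          ENNReal.ofReal (1 - p - q) * ENNReal.ofReal (q - max 0 (1/2 - p)) else 0)
      = ∫⁻ a : ℝ, Set.indicator {a' : ℝ | 0 ≤ a' ∧ a' ≤ p ∧ 1 ≤ 2*(a' + q)}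
          (fun _ => ENNReal.ofReal (1 - p - q) * ENNReal.ofReal (q - max 0 (1/2 - p))) a :=
        lintegral_congr fun a => by simp [Set.indicator_apply, Set.mem_setOf_eq]
    _ = (ENNReal.ofReal (1 - p - q) * ENNReal.ofReal (q - max 0 (1/2 - p))) *
          volume {a' : ℝ | 0 ≤ a' ∧ a' ≤ p ∧ 1 ≤ 2*(a' + q)} :=
        lintegral_indicator_const (by rw [aIcc]; exact measurableSet_Icc) _
    _ = ENNReal.ofReal (1 - p - q) * ENNReal.ofReal (q - max 0 (1/2 - p)) *
          ENNReal.ofReal (p - max 0 (1/2 - q)) := by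
        rw [aIcc, Real.volume_Icc]

noncomputable def g (p q : ℝ) : ℝ :=
  max (1-p-q) 0 * max (q - max 0 (1/2-p)) 0 * max (p - max 0 (1/2-q)) 0

lemma g_nonneg (p q : ℝ) : 0 ≤ g p q := by
  unfold g; positivity

lemma g_cont (p : ℝ) : Continuous (g p) := by
  unfold g; fun_prop

lemma ipoly (a b c0 c1 c2 c3 c4 : ℝ) :
    ∫ x in a..b, (c0 + c1*x + c2*x^2 + c3*x^3 + c4*x^4) =
      (c0*b + c1*b^2/2 + c2*b^3/3 + c3*b^4/4 + c4*b^5/5)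
        - (c0*a + c1*a^2/2 + c2*a^3/3 + c3*a^4/4 + c4*a^5/5) := by
  have hd : ∀ x : ℝ, HasDerivAt (fun x : ℝ =>
      c0*x + c1*x^2/2 + c2*x^3/3 + c3*x^4/4 + c4*x^5/5)
      (c0 + c1*x + c2*x^2 + c3*x^3 + c4*x^4) x := by
    intro x
    have h1 : HasDerivAt (fun x : ℝ => c0*x) c0 x := by
      simpa using (hasDerivAt_id x).const_mul c0
    have h2 : HasDerivAt (fun x : ℝ => c1*x^2/2) (c1*x) x := by
      have := (hasDerivAt_pow 2 x).const_mul (c1/2)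
      convert this using 1 <;> [rfl; rfl; funext y; skip] <;> push_cast <;> ring
    have h3 : HasDerivAt (fun x : ℝ => c2*x^3/3) (c2*x^2) x := by
      have := (hasDerivAt_pow 3 x).const_mul (c2/3)
      convert this using 1 <;> [rfl; rfl; funext y; skip] <;> push_cast <;> ring
    have h4 : HasDerivAt (fun x : ℝ => c3*x^4/4) (c3*x^3) x := by
      have := (hasDerivAt_pow 4 x).const_mul (c3/4)
      convert this using 1 <;> [rfl; rfl; funext y; skip] <;> push_cast <;> ring
    have h5 : HasDerivAt (fun x : ℝ => c4*x^5/5) (c4*x^4) x := by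
      have := (hasDerivAt_pow 5 x).const_mul (c4/5)
      convert this using 1 <;> [rfl; rfl; funext y; skip] <;> push_cast <;> ring
    exact (((h1.add h2).add h3).add h4).add h5
  rw [integral_eq_sub_of_hasDerivAt (fun x _ => hd x)]
  exact (Continuous.intervalIntegrable (by fun_prop) a b)

lemma int_supp {f : ℝ → ℝ} {lo hi : ℝ} (hle : lo ≤ hi)
    (h : ∀ q, q ∉ Set.Icc lo hi → f q = 0) : (∫ q, f q) = ∫ q in lo..hi, f q := by
  rw [intervalIntegral.integral_of_le hle, ← integral_Icc_eq_integral_Ioc]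
  exact (setIntegral_eq_integral_of_forall_compl_eq_zero h).symm


lemma g_zero_left (p q : ℝ) (h : q < 0) : g p q = 0 := by
  unfold g
  rw [max_eq_right (show q - max 0 (1/2-p) ≤ 0 by
    have := le_max_left (0:ℝ) (1/2-p); linarith)]
  ring

lemma g_zero_mid (p q : ℝ) (h : q < 1/2 - p) : g p q = 0 := by
  unfold g
  rw [max_eq_right (show q - max 0 (1/2-p) ≤ 0 by
    have := le_max_right (0:ℝ) (1/2-p); linarith)]
  ring

lemma g_zero_right (p q : ℝ) (h : 1 - p < q) : g p q = 0 := by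
  unfold g
  rw [max_eq_right (show 1 - p - q ≤ 0 by linarith)]
  ring

lemma g_zero_p (p q : ℝ) (h : p ≤ 0) : g p q = 0 := by
  unfold g
  rw [max_eq_right (show p - max 0 (1/2-q) ≤ 0 by
    have := le_max_left (0:ℝ) (1/2-q); linarith)]
  ring

noncomputable def JPC (p : ℝ) : ℝ :=
  Set.indicator (Set.Ioc 0 (1/2)) (fun t => t/48 - t^3/12 + t^4/12) p
  + Set.indicator (Set.Ioc (1/2) 1) (fun t => t/12 - t^2/4 + t^3/4 - t^4/12) p

lemma L1 (p : ℝ) : (∫ q : ℝ, g p q) = JPC p := by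
  have hII := fun a b => (g_cont p).intervalIntegrable (μ := volume) a b
  rcases le_or_gt p 0 with hp | hp
  · have m1 : p ∉ Set.Ioc (0:ℝ) (1/2) := by simp [Set.mem_Ioc]; intro h; linarith
    have m2 : p ∉ Set.Ioc (1/2:ℝ) 1 := by simp [Set.mem_Ioc]; intro h; linarith
    rw [JPC, Set.indicator_of_notMem m1, Set.indicator_of_notMem m2, add_zero]
    calc (∫ q : ℝ, g p q) = ∫ _ : ℝ, (0:ℝ) :=
          integral_congr_ae (Filter.Eventually.of_forall fun q => g_zero_p p q hp)
      _ = 0 := integral_zero _ _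
  rcases le_or_gt p (1/2) with hp2 | hp2
  · -- 0 < p ≤ 1/2
    have m1 : p ∈ Set.Ioc (0:ℝ) (1/2) := ⟨hp, hp2⟩
    have m2 : p ∉ Set.Ioc (1/2:ℝ) 1 := by simp [Set.mem_Ioc]; intro h; linarith
    rw [JPC, Set.indicator_of_mem m1, Set.indicator_of_notMem m2, add_zero]
    have hsupp : ∀ q, q ∉ Set.Icc (1/2 - p) (1-p) → g p q = 0 := by
      intro q hq
      rw [Set.mem_Icc, not_and_or, not_le, not_le] at hq
      rcases hq with h | h
      · exact g_zero_mid p q h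
      · exact g_zero_right p q h
    rw [int_supp (by linarith) hsupp,
      ← integral_add_adjacent_intervals (a := 1/2-p) (b := 1/2) (c := 1-p) (hII _ _) (hII _ _)]
    have e1 : (∫ q in (1/2-p)..(1/2:ℝ), g p q) = ∫ q in (1/2-p)..(1/2:ℝ),
        ((1/4 - 5/4*p + 2*p^2 - p^3) + (-5/4 + 4*p - 3*p^2)*q + (2 - 3*p)*q^2
          + (-1)*q^3 + 0*q^4) := by
      refine integral_congr fun q hq => ?_
      rw [Set.uIcc_of_le (by linarith)] at hq
      obtain ⟨hq1, hq2⟩ := hq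
      unfold g
      rw [max_eq_right (show (0:ℝ) ≤ 1/2 - p by linarith),
        max_eq_right (show (0:ℝ) ≤ 1/2 - q by linarith),
        max_eq_left (show (0:ℝ) ≤ 1 - p - q by linarith),
        max_eq_left (show (0:ℝ) ≤ q - (1/2 - p) by linarith),
        max_eq_left (show (0:ℝ) ≤ p - (1/2 - q) by linarith)]
      ring
    have e2 : (∫ q in (1/2:ℝ)..(1-p), g p q) = ∫ q in (1/2:ℝ)..(1-p),
        ((-1/2*p + 3/2*p^2 - p^3) + (3/2*p - 2*p^2)*q + (-p)*q^2 + 0*q^3 + 0*q^4) := by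
      refine integral_congr fun q hq => ?_
      rw [Set.uIcc_of_le (by linarith)] at hq
      obtain ⟨hq1, hq2⟩ := hq
      unfold g
      rw [max_eq_right (show (0:ℝ) ≤ 1/2 - p by linarith),
        max_eq_left (show (1:ℝ)/2 - q ≤ 0 by linarith),
        max_eq_left (show (0:ℝ) ≤ 1 - p - q by linarith),
        max_eq_left (show (0:ℝ) ≤ q - (1/2 - p) by linarith),
        max_eq_left (show (0:ℝ) ≤ p - 0 by linarith)]
      ring
    rw [e1, e2, ipoly, ipoly]
    ring
  rcases le_or_gt p 1 with hp3 | hp3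
  · -- 1/2 < p ≤ 1
    have m1 : p ∉ Set.Ioc (0:ℝ) (1/2) := by simp [Set.mem_Ioc]; intro h; linarith
    have m2 : p ∈ Set.Ioc (1/2:ℝ) 1 := ⟨hp2, hp3⟩
    rw [JPC, Set.indicator_of_notMem m1, Set.indicator_of_mem m2, zero_add]
    have hsupp : ∀ q, q ∉ Set.Icc (0:ℝ) (1-p) → g p q = 0 := by
      intro q hq
      rw [Set.mem_Icc, not_and_or, not_le, not_le] at hq
      rcases hq with h | h
      · exact g_zero_left p q h
      · exact g_zero_right p q h
    rw [int_supp (by linarith) hsupp]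
    have e3 : (∫ q in (0:ℝ)..(1-p), g p q) = ∫ q in (0:ℝ)..(1-p),
        ((0:ℝ) + (-1/2 + 3/2*p - p^2)*q + (3/2 - 2*p)*q^2 + (-1)*q^3 + 0*q^4) := by
      refine integral_congr fun q hq => ?_
      rw [Set.uIcc_of_le (by linarith)] at hq
      obtain ⟨hq1, hq2⟩ := hq
      unfold g
      rw [max_eq_left (show (1:ℝ)/2 - p ≤ 0 by linarith),
        max_eq_right (show (0:ℝ) ≤ 1/2 - q by linarith),
        max_eq_left (show (0:ℝ) ≤ 1 - p - q by linarith),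
        max_eq_left (show (0:ℝ) ≤ q - 0 by linarith),
        max_eq_left (show (0:ℝ) ≤ p - (1/2 - q) by linarith)]
      ring
    rw [e3, ipoly]
    ring
  · -- 1 < p
    have m1 : p ∉ Set.Ioc (0:ℝ) (1/2) := by simp [Set.mem_Ioc]; intro h; linarith
    have m2 : p ∉ Set.Ioc (1/2:ℝ) 1 := by simp [Set.mem_Ioc]; intro h; linarith
    rw [JPC, Set.indicator_of_notMem m1, Set.indicator_of_notMem m2, add_zero]
    have hz : ∀ q : ℝ, g p q = 0 := by
      intro q
      rcases lt_or_ge q 0 with h | h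
      · exact g_zero_left p q h
      · exact g_zero_right p q (by linarith)
    calc (∫ q : ℝ, g p q) = ∫ _ : ℝ, (0:ℝ) :=
          integral_congr_ae (Filter.Eventually.of_forall hz)
      _ = 0 := integral_zero _ _

noncomputable def h1 (p q : ℝ) : ℝ := if 1 ≤ p + 2*q ∧ 1 ≤ 2*p + q then g p q else 0

lemma h1_nonneg (p q : ℝ) : 0 ≤ h1 p q := by
  unfold h1; split_ifs; exacts [g_nonneg p q, le_refl 0]

lemma g_integrable (p : ℝ) : Integrable (g p) := by
  refine Continuous.integrable_of_hasCompactSupport (g_cont p) ?_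
  refine HasCompactSupport.intro (isCompact_Icc (a := (0:ℝ)) (b := 1)) fun q hq => ?_
  rw [Set.mem_Icc, not_and_or, not_le, not_le] at hq
  rcases hq with h | h
  · exact g_zero_left p q h
  · rcases le_or_gt p 0 with hp | hp
    · exact g_zero_p p q hp
    · exact g_zero_right p q (by linarith)

lemma h1_eq_indicator (p : ℝ) :
    h1 p = Set.indicator {q : ℝ | 1 ≤ p + 2*q ∧ 1 ≤ 2*p + q} (g p) :=
  funext fun q => by simp [h1, Set.indicator_apply, Set.mem_setOf_eq]

lemma h1_integrable (p : ℝ) : Integrable (h1 p) := by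
  rw [h1_eq_indicator]
  refine (g_integrable p).indicator ?_
  rw [Set.setOf_and]
  exact (measurableSet_le measurable_const (by fun_prop)).inter
    (measurableSet_le measurable_const (by fun_prop))

noncomputable def J1 (p : ℝ) : ℝ :=
  Set.indicator (Set.Ioc 0 (1/4)) (fun t => t^3/4 - t^4/3) p
  + Set.indicator (Set.Ioc (1/4) (1/3))
      (fun t => -1/192 + t/48 + t^2/8 - 5*t^3/12 + t^4/3) p
  + Set.indicator (Set.Ioc (1/3) (1/2)) (fun t => t/48 - 5*t^3/48 + 19*t^4/192) p
  + Set.indicator (Set.Ioc (1/2) 1)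
      (fun t => 1/64 - t/48 - t^2/32 + t^3/16 - 5*t^4/192) p

set_option maxHeartbeats 2000000 in
lemma L2 (p : ℝ) : (∫ q : ℝ, h1 p q) = J1 p := by
  have hII := fun a b => ((h1_integrable p).intervalIntegrable (a := a) (b := b))
  have nm : ∀ u v : ℝ, ¬(u < p ∧ p ≤ v) → p ∉ Set.Ioc u v := fun u v h => by
    simpa [Set.mem_Ioc] using h
  have hzg : (∀ q : ℝ, h1 p q = 0) → (∫ q : ℝ, h1 p q) = 0 := fun hz => by
    rw [integral_congr_ae (Filter.Eventually.of_forall hz)]; exact integral_zero _ _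
  rcases le_or_gt p 0 with hp | hp
  · rw [J1, Set.indicator_of_notMem (nm _ _ (by rintro ⟨h,_⟩; linarith)),
      Set.indicator_of_notMem (nm _ _ (by rintro ⟨h,_⟩; linarith)),
      Set.indicator_of_notMem (nm _ _ (by rintro ⟨h,_⟩; linarith)),
      Set.indicator_of_notMem (nm _ _ (by rintro ⟨h,_⟩; linarith)),
      hzg fun q => by unfold h1; split_ifs; exacts [g_zero_p p q hp, rfl]]
    norm_num
  rcases le_or_gt p (1/4) with hp2 | hp2
  · -- 0 < p ≤ 1/4
    rw [J1, Set.indicator_of_mem (Set.mem_Ioc.2 ⟨hp, hp2⟩),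
      Set.indicator_of_notMem (nm _ _ (by rintro ⟨h,h2⟩; linarith)),
      Set.indicator_of_notMem (nm _ _ (by rintro ⟨h,h2⟩; linarith)),
      Set.indicator_of_notMem (nm _ _ (by rintro ⟨h,h2⟩; linarith))]
    have hsupp : ∀ q, q ∉ Set.Icc (1-2*p) (1-p) → h1 p q = 0 := by
      intro q hq
      rw [Set.mem_Icc, not_and_or, not_le, not_le] at hq
      unfold h1
      rcases hq with h | h
      · rw [if_neg (by rintro ⟨hA, hB⟩; linarith)]
      · split_ifs with hc
        exacts [g_zero_right p q (by linarith), rfl]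
    rw [int_supp (by linarith) hsupp]
    have e : (∫ q in (1-2*p)..(1-p), h1 p q) = ∫ q in (1-2*p)..(1-p),
        ((-1/2*p + 3/2*p^2 - p^3) + (3/2*p - 2*p^2)*q + (-p)*q^2 + 0*q^3 + 0*q^4) := by
      refine integral_congr fun q hq => ?_
      rw [Set.uIcc_of_le (by linarith)] at hq
      obtain ⟨hq1, hq2⟩ := hq
      unfold h1
      rw [if_pos ⟨by linarith, by linarith⟩]
      unfold g
      rw [max_eq_right (show (0:ℝ) ≤ 1/2 - p by linarith),
        max_eq_left (show (1:ℝ)/2 - q ≤ 0 by linarith),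
        max_eq_left (show (0:ℝ) ≤ 1 - p - q by linarith),
        max_eq_left (show (0:ℝ) ≤ q - (1/2 - p) by linarith),
        max_eq_left (show (0:ℝ) ≤ p - 0 by linarith)]
      ring
    rw [e, ipoly]
    ring
  rcases le_or_gt p (1/3) with hp3 | hp3
  · -- 1/4 < p ≤ 1/3
    rw [J1, Set.indicator_of_notMem (nm _ _ (by rintro ⟨h,h2⟩; linarith)),
      Set.indicator_of_mem (Set.mem_Ioc.2 ⟨hp2, hp3⟩),
      Set.indicator_of_notMem (nm _ _ (by rintro ⟨h,h2⟩; linarith)),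
      Set.indicator_of_notMem (nm _ _ (by rintro ⟨h,h2⟩; linarith))]
    have hsupp : ∀ q, q ∉ Set.Icc (1-2*p) (1-p) → h1 p q = 0 := by
      intro q hq
      rw [Set.mem_Icc, not_and_or, not_le, not_le] at hq
      unfold h1
      rcases hq with h | h
      · rw [if_neg (by rintro ⟨hA, hB⟩; linarith)]
      · split_ifs with hc
        exacts [g_zero_right p q (by linarith), rfl]
    rw [int_supp (by linarith) hsupp,
      ← integral_add_adjacent_intervals (a := 1-2*p) (b := 1/2) (c := 1-p) (hII _ _) (hII _ _)]
    have e1 : (∫ q in (1-2*p)..(1/2:ℝ), h1 p q) = ∫ q in (1-2*p)..(1/2:ℝ),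
        ((1/4 - 5/4*p + 2*p^2 - p^3) + (-5/4 + 4*p - 3*p^2)*q + (2 - 3*p)*q^2
          + (-1)*q^3 + 0*q^4) := by
      refine integral_congr fun q hq => ?_
      rw [Set.uIcc_of_le (by linarith)] at hq
      obtain ⟨hq1, hq2⟩ := hq
      unfold h1
      rw [if_pos ⟨by linarith, by linarith⟩]
      unfold g
      rw [max_eq_right (show (0:ℝ) ≤ 1/2 - p by linarith),
        max_eq_right (show (0:ℝ) ≤ 1/2 - q by linarith),
        max_eq_left (show (0:ℝ) ≤ 1 - p - q by linarith),
        max_eq_left (show (0:ℝ) ≤ q - (1/2 - p) by linarith),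
        max_eq_left (show (0:ℝ) ≤ p - (1/2 - q) by linarith)]
      ring
    have e2 : (∫ q in (1/2:ℝ)..(1-p), h1 p q) = ∫ q in (1/2:ℝ)..(1-p),
        ((-1/2*p + 3/2*p^2 - p^3) + (3/2*p - 2*p^2)*q + (-p)*q^2 + 0*q^3 + 0*q^4) := by
      refine integral_congr fun q hq => ?_
      rw [Set.uIcc_of_le (by linarith)] at hq
      obtain ⟨hq1, hq2⟩ := hq
      unfold h1
      rw [if_pos ⟨by linarith, by linarith⟩]
      unfold g
      rw [max_eq_right (show (0:ℝ) ≤ 1/2 - p by linarith),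
        max_eq_left (show (1:ℝ)/2 - q ≤ 0 by linarith),
        max_eq_left (show (0:ℝ) ≤ 1 - p - q by linarith),
        max_eq_left (show (0:ℝ) ≤ q - (1/2 - p) by linarith),
        max_eq_left (show (0:ℝ) ≤ p - 0 by linarith)]
      ring
    rw [e1, e2, ipoly, ipoly]
    ring
  rcases le_or_gt p (1/2) with hp4 | hp4
  · -- 1/3 < p ≤ 1/2
    rw [J1, Set.indicator_of_notMem (nm _ _ (by rintro ⟨h,h2⟩; linarith)),
      Set.indicator_of_notMem (nm _ _ (by rintro ⟨h,h2⟩; linarith)),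
      Set.indicator_of_mem (Set.mem_Ioc.2 ⟨hp3, hp4⟩),
      Set.indicator_of_notMem (nm _ _ (by rintro ⟨h,h2⟩; linarith))]
    have hsupp : ∀ q, q ∉ Set.Icc ((1-p)/2) (1-p) → h1 p q = 0 := by
      intro q hq
      rw [Set.mem_Icc, not_and_or, not_le, not_le] at hq
      unfold h1
      rcases hq with h | h
      · rw [if_neg (by rintro ⟨hA, hB⟩; linarith)]
      · split_ifs with hc
        exacts [g_zero_right p q (by linarith), rfl]
    rw [int_supp (by linarith) hsupp,
      ← integral_add_adjacent_intervals (a := (1-p)/2) (b := 1/2) (c := 1-p) (hII _ _) (hII _ _)]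
    have e1 : (∫ q in ((1-p)/2)..(1/2:ℝ), h1 p q) = ∫ q in ((1-p)/2)..(1/2:ℝ),
        ((1/4 - 5/4*p + 2*p^2 - p^3) + (-5/4 + 4*p - 3*p^2)*q + (2 - 3*p)*q^2
          + (-1)*q^3 + 0*q^4) := by
      refine integral_congr fun q hq => ?_
      rw [Set.uIcc_of_le (by linarith)] at hq
      obtain ⟨hq1, hq2⟩ := hq
      unfold h1
      rw [if_pos ⟨by linarith, by linarith⟩]
      unfold g
      rw [max_eq_right (show (0:ℝ) ≤ 1/2 - p by linarith),
        max_eq_right (show (0:ℝ) ≤ 1/2 - q by linarith),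
        max_eq_left (show (0:ℝ) ≤ 1 - p - q by linarith),
        max_eq_left (show (0:ℝ) ≤ q - (1/2 - p) by linarith),
        max_eq_left (show (0:ℝ) ≤ p - (1/2 - q) by linarith)]
      ring
    have e2 : (∫ q in (1/2:ℝ)..(1-p), h1 p q) = ∫ q in (1/2:ℝ)..(1-p),
        ((-1/2*p + 3/2*p^2 - p^3) + (3/2*p - 2*p^2)*q + (-p)*q^2 + 0*q^3 + 0*q^4) := by
      refine integral_congr fun q hq => ?_
      rw [Set.uIcc_of_le (by linarith)] at hq
      obtain ⟨hq1, hq2⟩ := hq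
      unfold h1
      rw [if_pos ⟨by linarith, by linarith⟩]
      unfold g
      rw [max_eq_right (show (0:ℝ) ≤ 1/2 - p by linarith),
        max_eq_left (show (1:ℝ)/2 - q ≤ 0 by linarith),
        max_eq_left (show (0:ℝ) ≤ 1 - p - q by linarith),
        max_eq_left (show (0:ℝ) ≤ q - (1/2 - p) by linarith),
        max_eq_left (show (0:ℝ) ≤ p - 0 by linarith)]
      ring
    rw [e1, e2, ipoly, ipoly]
    ring
  rcases le_or_gt p 1 with hp5 | hp5
  · -- 1/2 < p ≤ 1
    rw [J1, Set.indicator_of_notMem (nm _ _ (by rintro ⟨h,h2⟩; linarith)),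
      Set.indicator_of_notMem (nm _ _ (by rintro ⟨h,h2⟩; linarith)),
      Set.indicator_of_notMem (nm _ _ (by rintro ⟨h,h2⟩; linarith)),
      Set.indicator_of_mem (Set.mem_Ioc.2 ⟨hp4, hp5⟩)]
    have hsupp : ∀ q, q ∉ Set.Icc ((1-p)/2) (1-p) → h1 p q = 0 := by
      intro q hq
      rw [Set.mem_Icc, not_and_or, not_le, not_le] at hq
      unfold h1
      rcases hq with h | h
      · rw [if_neg (by rintro ⟨hA, hB⟩; linarith)]
      · split_ifs with hc
        exacts [g_zero_right p q (by linarith), rfl]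
    rw [int_supp (by linarith) hsupp]
    have e : (∫ q in ((1-p)/2)..(1-p), h1 p q) = ∫ q in ((1-p)/2)..(1-p),
        ((0:ℝ) + (-1/2 + 3/2*p - p^2)*q + (3/2 - 2*p)*q^2 + (-1)*q^3 + 0*q^4) := by
      refine integral_congr fun q hq => ?_
      rw [Set.uIcc_of_le (by linarith)] at hq
      obtain ⟨hq1, hq2⟩ := hq
      unfold h1
      rw [if_pos ⟨by linarith, by linarith⟩]
      unfold g
      rw [max_eq_left (show (1:ℝ)/2 - p ≤ 0 by linarith),
        max_eq_right (show (0:ℝ) ≤ 1/2 - q by linarith),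
        max_eq_left (show (0:ℝ) ≤ 1 - p - q by linarith),
        max_eq_left (show (0:ℝ) ≤ q - 0 by linarith),
        max_eq_left (show (0:ℝ) ≤ p - (1/2 - q) by linarith)]
      ring
    rw [e, ipoly]
    ring
  · -- 1 < p
    rw [J1, Set.indicator_of_notMem (nm _ _ (by rintro ⟨h,h2⟩; linarith)),
      Set.indicator_of_notMem (nm _ _ (by rintro ⟨h,h2⟩; linarith)),
      Set.indicator_of_notMem (nm _ _ (by rintro ⟨h,h2⟩; linarith)),
      Set.indicator_of_notMem (nm _ _ (by rintro ⟨h,h2⟩; linarith)),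
      hzg fun q => by
        unfold h1
        split_ifs with hc
        · rcases lt_or_ge q 0 with h | h
          · exact g_zero_left p q h
          · exact g_zero_right p q (by linarith)
        · rfl]
    norm_num

lemma ind_integrable {a b : ℝ} (f : ℝ → ℝ) (hf : Continuous f) :
    Integrable (Set.indicator (Set.Ioc a b) f) := by
  rw [integrable_indicator_iff measurableSet_Ioc]
  exact (hf.integrableOn_Icc).mono_set Set.Ioc_subset_Icc_self

lemma ind_integral {a b : ℝ} (hle : a ≤ b) (f : ℝ → ℝ) :
    (∫ p, Set.indicator (Set.Ioc a b) f p) = ∫ p in a..b, f p := by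
  rw [MeasureTheory.integral_indicator measurableSet_Ioc,
    intervalIntegral.integral_of_le hle]

lemma JPC_integrable : Integrable JPC := by
  unfold JPC
  exact (ind_integrable _ (by fun_prop)).add (ind_integrable _ (by fun_prop))

lemma J1_integrable : Integrable J1 := by
  unfold J1
  exact (((ind_integrable _ (by fun_prop)).add (ind_integrable _ (by fun_prop))).add
    (ind_integrable _ (by fun_prop))).add (ind_integrable _ (by fun_prop))

lemma OPC : (∫ p, JPC p) = 1/384 := by
  unfold JPC
  rw [integral_add (ind_integrable _ (by fun_prop)) (ind_integrable _ (by fun_prop)),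
    ind_integral (by norm_num), ind_integral (by norm_num)]
  have e1 : (∫ p in (0:ℝ)..(1/2), (p/48 - p^3/12 + p^4/12)) = ∫ p in (0:ℝ)..(1/2),
      ((0:ℝ) + (1/48)*p + 0*p^2 + (-1/12)*p^3 + (1/12)*p^4) :=
    intervalIntegral.integral_congr fun p _ => by ring
  have e2 : (∫ p in (1/2:ℝ)..1, (p/12 - p^2/4 + p^3/4 - p^4/12)) = ∫ p in (1/2:ℝ)..1,
      ((0:ℝ) + (1/12)*p + (-1/4)*p^2 + (1/4)*p^3 + (-1/12)*p^4) :=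
    intervalIntegral.integral_congr fun p _ => by ring
  rw [e1, e2, ipoly, ipoly]
  norm_num

lemma O1 : (∫ p, J1 p) = 17/10368 := by
  have i1 := ind_integrable (a := (0:ℝ)) (b := 1/4) (fun t => t^3/4 - t^4/3) (by fun_prop)
  have i2 := ind_integrable (a := (1/4:ℝ)) (b := 1/3)
    (fun t => -1/192 + t/48 + t^2/8 - 5*t^3/12 + t^4/3) (by fun_prop)
  have i3 := ind_integrable (a := (1/3:ℝ)) (b := 1/2)
    (fun t => t/48 - 5*t^3/48 + 19*t^4/192) (by fun_prop)
  have i4 := ind_integrable (a := (1/2:ℝ)) (b := 1)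
    (fun t => 1/64 - t/48 - t^2/32 + t^3/16 - 5*t^4/192) (by fun_prop)
  unfold J1
  rw [integral_add (μ := volume)
      (f := fun p => Set.indicator (Set.Ioc 0 (1/4)) (fun t => t^3/4 - t^4/3) p
        + Set.indicator (Set.Ioc (1/4) (1/3))
            (fun t => -1/192 + t/48 + t^2/8 - 5*t^3/12 + t^4/3) p
        + Set.indicator (Set.Ioc (1/3) (1/2)) (fun t => t/48 - 5*t^3/48 + 19*t^4/192) p)
      ((i1.add i2).add i3) i4,
    integral_add (μ := volume)
      (f := fun p => Set.indicator (Set.Ioc 0 (1/4)) (fun t => t^3/4 - t^4/3) p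
        + Set.indicator (Set.Ioc (1/4) (1/3))
            (fun t => -1/192 + t/48 + t^2/8 - 5*t^3/12 + t^4/3) p)
      (i1.add i2) i3,
    integral_add (μ := volume) i1 i2,
    ind_integral (by norm_num), ind_integral (by norm_num), ind_integral (by norm_num),
    ind_integral (by norm_num)]
  have e1 : (∫ p in (0:ℝ)..(1/4), (p^3/4 - p^4/3)) = ∫ p in (0:ℝ)..(1/4),
      ((0:ℝ) + 0*p + 0*p^2 + (1/4)*p^3 + (-1/3)*p^4) :=
    intervalIntegral.integral_congr fun p _ => by ring
  have e2 : (∫ p in (1/4:ℝ)..(1/3), (-1/192 + p/48 + p^2/8 - 5*p^3/12 + p^4/3))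
      = ∫ p in (1/4:ℝ)..(1/3),
      ((-1/192:ℝ) + (1/48)*p + (1/8)*p^2 + (-5/12)*p^3 + (1/3)*p^4) :=
    intervalIntegral.integral_congr fun p _ => by ring
  have e3 : (∫ p in (1/3:ℝ)..(1/2), (p/48 - 5*p^3/48 + 19*p^4/192)) = ∫ p in (1/3:ℝ)..(1/2),
      ((0:ℝ) + (1/48)*p + 0*p^2 + (-5/48)*p^3 + (19/192)*p^4) :=
    intervalIntegral.integral_congr fun p _ => by ring
  have e4 : (∫ p in (1/2:ℝ)..1, (1/64 - p/48 - p^2/32 + p^3/16 - 5*p^4/192))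
      = ∫ p in (1/2:ℝ)..1,
      ((1/64:ℝ) + (-1/48)*p + (-1/32)*p^2 + (1/16)*p^3 + (-5/192)*p^4) :=
    intervalIntegral.integral_congr fun p _ => by ring
  rw [e1, e2, e3, e4, ipoly, ipoly, ipoly, ipoly]
  norm_num

-- ENNReal glue
lemma ofReal_max0 (x : ℝ) : ENNReal.ofReal (max x 0) = ENNReal.ofReal x := by
  rcases le_or_gt x 0 with h | h
  · rw [max_eq_right h, ENNReal.ofReal_of_nonpos h, ENNReal.ofReal_zero]
  · rw [max_eq_left h.le]

lemma triple_g (p q : ℝ) :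
    ENNReal.ofReal (1 - p - q) * ENNReal.ofReal (q - max 0 (1/2 - p)) *
      ENNReal.ofReal (p - max 0 (1/2 - q)) = ENNReal.ofReal (g p q) := by
  rw [← ofReal_max0 (1 - p - q), ← ofReal_max0 (q - max 0 (1/2 - p)),
    ← ofReal_max0 (p - max 0 (1/2 - q)),
    ← ENNReal.ofReal_mul (le_max_right _ 0), ← ENNReal.ofReal_mul (by positivity)]
  rfl

def B1 : Set (Fin 5 → ℝ) := {y | (1 ≤ y 0 + 2*y 1 ∧ 1 ≤ 2*y 0 + y 1) ∧ y ∈ BPC}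

lemma B1_meas : MeasurableSet B1 := by
  have : B1 = ({y : Fin 5 → ℝ | 1 ≤ y 0 + 2*y 1} ∩ {y | 1 ≤ 2*y 0 + y 1}) ∩ BPC := by
    ext y; simp only [B1, Set.mem_setOf_eq, Set.mem_inter_iff, and_assoc]
  rw [this]
  exact ((measurableSet_le measurable_const (by fun_prop)).inter
    (measurableSet_le measurable_const (by fun_prop))).inter BPC_meas

lemma A1_eq : ({x : Fin 5 → ℝ |
        (∀ i, 0 ≤ x i) ∧ x 0 + x 1 + x 2 + x 3 + x 4 ≤ 1 ∧
        1 ≤ x 0 + 2 * x 1 + x 2 + 2 * x 4 ∧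
        1 ≤ 2 * x 0 + x 1 + 2 * x 2 + x 4} ∩
      {x : Fin 5 → ℝ |
        (∀ i, 0 ≤ x i) ∧ x 0 + x 1 + x 2 + x 3 + x 4 ≤ 1 ∧
        1 ≤ 2 * (x 0 + x 1 + x 4) ∧ 1 ≤ 2 * (x 0 + x 1 + x 2)}) = Tl '' B1 := by
  ext x
  simp only [Set.mem_inter_iff, Set.mem_setOf_eq, Set.mem_image]
  constructor
  · rintro ⟨⟨hpos, hsum, hA1, hA2⟩, ⟨-, -, hC1, hC2⟩⟩
    refine ⟨![x 0 + x 2, x 1 + x 4, x 0, x 1, x 3], ⟨?_, ?_⟩, ?_⟩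
    · constructor <;>
        simp only [Matrix.cons_val_zero, Matrix.cons_val_one, Matrix.head_cons] <;> linarith
    · refine ⟨?_, ?_, ?_, ?_, ?_, ?_, ?_, ?_⟩ <;>
        simp only [BPC, Set.mem_setOf_eq, Matrix.cons_val_zero, Matrix.cons_val_one,
          Matrix.head_cons, Matrix.cons_val_two, Matrix.tail_cons, Matrix.cons_val_three,
          Matrix.cons_val_four] <;>
        [exact hpos 0; linarith [hpos 2]; exact hpos 1; linarith [hpos 4];
         exact hpos 3; linarith; linarith; linarith]
    · rw [Tl_apply]
      funext i
      fin_cases i <;> simp <;> ring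
  · rintro ⟨y, ⟨⟨hE1, hE2⟩, h1, h2, h3, h4, h5, h6, h7, h8⟩, rfl⟩
    rw [Tl_apply]
    constructor
    · refine ⟨fun i => ?_, ?_, ?_, ?_⟩
      · fin_cases i <;> simp <;> linarith
      · simp; linarith
      · simp; linarith
      · simp; linarith
    · refine ⟨fun i => ?_, ?_, ?_, ?_⟩
      · fin_cases i <;> simp <;> linarith
      · simp; linarith
      · simp; linarith
      · simp; linarith

lemma volT (B : Set (Fin 5 → ℝ)) : volume (Tl '' B) = volume B := by
  rw [MeasureTheory.Measure.addHaar_image_linearMap, Tl_det]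
  norm_num

open Classical in
lemma inner1 (p q a b : ℝ) :
    volume {d : ℝ | ![p, q, a, b, d] ∈ B1} =
      if 1 ≤ p + 2*q ∧ 1 ≤ 2*p + q then volume {d : ℝ | ![p, q, a, b, d] ∈ BPC} else 0 := by
  by_cases hE : 1 ≤ p + 2*q ∧ 1 ≤ 2*p + q
  · rw [if_pos hE]
    congr 1
    ext d
    simp only [B1, Set.mem_setOf_eq, Matrix.cons_val_zero, Matrix.cons_val_one,
      Matrix.head_cons]
    exact ⟨fun h => h.2, fun h => ⟨hE, h⟩⟩
  · rw [if_neg hE]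
    convert measure_empty (μ := volume)
    ext d
    simp only [B1, Set.mem_setOf_eq, Matrix.cons_val_zero, Matrix.cons_val_one,
      Matrix.head_cons, Set.mem_empty_iff_false, iff_false]
    rintro ⟨hE', -⟩
    exact hE hE'

lemma JPC_nonneg (p : ℝ) : 0 ≤ JPC p := L1 p ▸ integral_nonneg (g_nonneg p)

lemma J1_nonneg (p : ℝ) : 0 ≤ J1 p := L2 p ▸ integral_nonneg (h1_nonneg p)

lemma vol_PC : volume {x : Fin 5 → ℝ |
        (∀ i, 0 ≤ x i) ∧ x 0 + x 1 + x 2 + x 3 + x 4 ≤ 1 ∧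
        1 ≤ 2 * (x 0 + x 1 + x 4) ∧ 1 ≤ 2 * (x 0 + x 1 + x 2)} =
      ENNReal.ofReal (1/384) := by
  rw [APC_eq, volT, vol5 BPC BPC_meas]
  have step : ∀ p : ℝ, (∫⁻ q : ℝ, ∫⁻ a : ℝ, ∫⁻ b : ℝ,
      volume {d : ℝ | ![p, q, a, b, d] ∈ BPC}) = ENNReal.ofReal (JPC p) := by
    intro p
    calc (∫⁻ q : ℝ, ∫⁻ a : ℝ, ∫⁻ b : ℝ, volume {d : ℝ | ![p, q, a, b, d] ∈ BPC})
        = ∫⁻ q : ℝ, ENNReal.ofReal (g p q) :=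
          lintegral_congr fun q => by rw [innerPC, triple_g]
      _ = ENNReal.ofReal (∫ q, g p q) :=
          (ofReal_integral_eq_lintegral_ofReal (g_integrable p)
            (Filter.Eventually.of_forall (g_nonneg p))).symm
      _ = ENNReal.ofReal (JPC p) := by rw [L1]
  rw [lintegral_congr step,
    ← ofReal_integral_eq_lintegral_ofReal JPC_integrable
      (Filter.Eventually.of_forall JPC_nonneg), OPC]

lemma vol_I : volume ({x : Fin 5 → ℝ |
        (∀ i, 0 ≤ x i) ∧ x 0 + x 1 + x 2 + x 3 + x 4 ≤ 1 ∧
        1 ≤ x 0 + 2 * x 1 + x 2 + 2 * x 4 ∧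
        1 ≤ 2 * x 0 + x 1 + 2 * x 2 + x 4} ∩
      {x : Fin 5 → ℝ |
        (∀ i, 0 ≤ x i) ∧ x 0 + x 1 + x 2 + x 3 + x 4 ≤ 1 ∧
        1 ≤ 2 * (x 0 + x 1 + x 4) ∧ 1 ≤ 2 * (x 0 + x 1 + x 2)}) =
      ENNReal.ofReal (17/10368) := by
  rw [A1_eq, volT, vol5 B1 B1_meas]
  have step : ∀ p : ℝ, (∫⁻ q : ℝ, ∫⁻ a : ℝ, ∫⁻ b : ℝ,
      volume {d : ℝ | ![p, q, a, b, d] ∈ B1}) = ENNReal.ofReal (J1 p) := by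
    intro p
    calc (∫⁻ q : ℝ, ∫⁻ a : ℝ, ∫⁻ b : ℝ, volume {d : ℝ | ![p, q, a, b, d] ∈ B1})
        = ∫⁻ q : ℝ, ENNReal.ofReal (h1 p q) := by
          refine lintegral_congr fun q => ?_
          simp_rw [inner1 p q]
          by_cases hE : 1 ≤ p + 2*q ∧ 1 ≤ 2*p + q
          · simp only [hE, and_self, if_true]
            rw [innerPC, triple_g, h1, if_pos hE]
          · simp only [hE, if_false]
            rw [h1, if_neg hE, ENNReal.ofReal_zero, lintegral_zero, lintegral_zero]
      _ = ENNReal.ofReal (∫ q, h1 p q) :=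
          (ofReal_integral_eq_lintegral_ofReal (h1_integrable p)
            (Filter.Eventually.of_forall (h1_nonneg p))).symm
      _ = ENNReal.ofReal (J1 p) := by rw [L2]
  rw [lintegral_congr step,
    ← ofReal_integral_eq_lintegral_ofReal J1_integrable
      (Filter.Eventually.of_forall J1_nonneg), O1]

/-- The limiting Condorcet efficiency of the antiplurality rule under IAC for 3
candidates: `vol(P₁ ∩ P_C)/vol(P_C) = 17/27`, where `P₁` is the set of voting
situations in which `a` wins under antiplurality and `P_C` the set where `a` is
the Condorcet winner. -/
theorem condorcet_efficiency_antiplurality :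
    volume ({x : Fin 5 → ℝ |
        (∀ i, 0 ≤ x i) ∧ x 0 + x 1 + x 2 + x 3 + x 4 ≤ 1 ∧
        1 ≤ x 0 + 2 * x 1 + x 2 + 2 * x 4 ∧
        1 ≤ 2 * x 0 + x 1 + 2 * x 2 + x 4} ∩
      {x : Fin 5 → ℝ |
        (∀ i, 0 ≤ x i) ∧ x 0 + x 1 + x 2 + x 3 + x 4 ≤ 1 ∧
        1 ≤ 2 * (x 0 + x 1 + x 4) ∧ 1 ≤ 2 * (x 0 + x 1 + x 2)}) /
    volume {x : Fin 5 → ℝ |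
        (∀ i, 0 ≤ x i) ∧ x 0 + x 1 + x 2 + x 3 + x 4 ≤ 1 ∧
        1 ≤ 2 * (x 0 + x 1 + x 4) ∧ 1 ≤ 2 * (x 0 + x 1 + x 2)} = 17 / 27 := by
  rw [vol_I, vol_PC, ← ENNReal.ofReal_div_of_pos (by norm_num)]
  norm_num
  rw [ENNReal.ofReal_div_of_pos (by norm_num)]
  norm_num
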